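/- There exist a two-point prior (true values t₁ < t₂ with weights q and 1 − q, q ∈ (0, 1)), a Gaussian measurement model, a scale M with t₁ < M < t₂, and two events with observed values and resolutions (μ₁, σ₁) and (μ₂, σ₂), σ₁, σ₂ > 0, such that the remeasurement probabilities satisfy P_M^{(1)} < P_M^{(2)} while the posterior truth probabilities satisfy Q_M^{(1)} > Q_M^{(2)}, where P_M^{(i)} = ∫_M^∞ Gauss(x, μ_i, σ_i) dx and Q_M^{(i)} = (1 − q)·Gauss(μ_i, t₂, σ_i) / ( q·Gauss(μ_i, t₁, σ_i) + (1 − q)·Gauss(μ_i, t₂, σ_i) ). Hence an ordering of events by P_M does not determine the ordering by Q_M: the variables P_M and Q_M do not contain the same information. -/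

import Mathlib

open MeasureTheory Real Set

/-- The Gaussian probability density with mean `μ` and width `σ`. -/
noncomputable def gauss (x μ σ : ℝ) : ℝ :=
  (1 / (σ * Real.sqrt (2 * Real.pi))) * Real.exp (-(x - μ) ^ 2 / (2 * σ ^ 2))

noncomputable def stdg (x : ℝ) : ℝ := (1 / Real.sqrt (2 * Real.pi)) * Real.exp (-(1/2) * x ^ 2)

lemma stdg_integrable : Integrable stdg := by
  unfold stdg
  exact (integrable_exp_neg_mul_sq (by norm_num : (0:ℝ) < 1/2)).const_mul _

lemma integral_comp_add_right_Ioi (g : ℝ → ℝ) (a c : ℝ) :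
    (∫ x in Ioi a, g (x + c)) = ∫ x in Ioi (a + c), g x := by
  rw [← integral_indicator measurableSet_Ioi, ← integral_indicator measurableSet_Ioi,
    ← integral_add_right_eq_self (fun x => Set.indicator (Ioi (a + c)) g x) c]
  congr 1
  ext x
  simp only [Set.indicator, mem_Ioi]
  have : a < x ↔ a + c < x + c := by constructor <;> intro <;> linarith
  by_cases h : a < x
  · simp [h, this.mp h]
  · simp [h, fun hh => h (this.mpr hh)]

lemma gauss_eq_stdg (x μ σ : ℝ) (hσ : 0 < σ) :
    gauss x μ σ = σ⁻¹ * stdg ((x + -μ) * σ⁻¹) := by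
  unfold gauss stdg
  rw [mul_pow]
  field_simp
  ring_nf

lemma integral_gauss_Ioi (M μ σ : ℝ) (hσ : 0 < σ) :
    (∫ x in Ioi M, gauss x μ σ) = ∫ x in Ioi ((M - μ) / σ), stdg x := by
  have h1 : ∀ x, gauss x μ σ = σ⁻¹ * stdg ((x + -μ) * σ⁻¹) := fun x => gauss_eq_stdg x μ σ hσ
  simp_rw [h1]
  rw [integral_const_mul, integral_comp_add_right_Ioi (fun y => stdg (y * σ⁻¹)) M (-μ),
    integral_comp_mul_right_Ioi stdg _ (inv_pos.mpr hσ)]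
  simp only [smul_eq_mul, inv_inv]
  rw [← mul_assoc, inv_mul_cancel₀ hσ.ne', one_mul]
  rw [div_eq_mul_inv, sub_eq_add_neg]

lemma gauss_pos (x μ σ : ℝ) (hσ : 0 < σ) : 0 < gauss x μ σ := by
  unfold gauss
  have h2π : (0:ℝ) < 2 * Real.pi := by positivity
  positivity

lemma stdg_pos (x : ℝ) : 0 < stdg x := by
  unfold stdg
  have h2π : (0:ℝ) < 2 * Real.pi := by positivity
  positivity

lemma P_lt : (∫ x in Ioi (1:ℝ), gauss x 2 1) < ∫ x in Ioi (1:ℝ), gauss x 3 (3/2) := by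
  rw [integral_gauss_Ioi 1 2 1 one_pos, integral_gauss_Ioi 1 3 (3/2) (by norm_num)]
  norm_num
  have hunion : Ioc ((-(4/3):ℝ)) (-1) ∪ Ioi (-1:ℝ) = Ioi ((-(4/3):ℝ)) :=
    Set.Ioc_union_Ioi_eq_Ioi (by norm_num)
  have hdisj : Disjoint (Ioc ((-(4/3):ℝ)) (-1)) (Ioi (-1:ℝ)) := by
    apply Set.disjoint_left.mpr
    intro x hx hx'
    exact absurd hx.2 (not_le.mpr hx')
  have hint1 : IntegrableOn stdg (Ioc ((-(4/3):ℝ)) (-1)) := stdg_integrable.integrableOn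
  have hint2 : IntegrableOn stdg (Ioi (-1:ℝ)) := stdg_integrable.integrableOn
  have hsplit : ∫ x in Ioi ((-(4/3):ℝ)), stdg x
      = (∫ x in Ioc ((-(4/3):ℝ)) (-1), stdg x) + ∫ x in Ioi (-1:ℝ), stdg x := by
    rw [← hunion, setIntegral_union hdisj measurableSet_Ioi hint1 hint2]
  have hpos : 0 < ∫ x in Ioc ((-(4/3):ℝ)) (-1), stdg x := by
    have hc : (0:ℝ) < (1 / Real.sqrt (2 * Real.pi)) * Real.exp (-(1/2) * (4/3) ^ 2) := by
      have h2π : (0:ℝ) < 2 * Real.pi := by positivity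
      positivity
    have hle : ∀ x ∈ Ioc ((-(4/3):ℝ)) (-1),
        (1 / Real.sqrt (2 * Real.pi)) * Real.exp (-(1/2) * (4/3) ^ 2) ≤ stdg x := by
      intro x hx
      unfold stdg
      have h2π : (0:ℝ) < 2 * Real.pi := by positivity
      have : x ^ 2 ≤ (4/3) ^ 2 := by nlinarith [hx.1, hx.2]
      have : Real.exp (-(1/2) * (4/3) ^ 2) ≤ Real.exp (-(1/2) * x ^ 2) := by
        apply Real.exp_le_exp.mpr; nlinarith
      exact mul_le_mul_of_nonneg_left this (by positivity)
    have hvol : (volume (Ioc ((-(4/3):ℝ)) (-1))).toReal = 1/3 := by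
      rw [Real.volume_Ioc]
      rw [ENNReal.toReal_ofReal (by norm_num)]
      norm_num
    have := setIntegral_ge_of_const_le (measurableSet_Ioc)
      (by rw [Real.volume_Ioc]; exact ENNReal.ofReal_ne_top) hle hint1
    rw [measureReal_def, hvol, smul_eq_mul] at this
    nlinarith [hc]
  rw [hsplit]
  linarith


/-- There exist a two-point prior (true values `t₁ < t₂` with weights `q` and `1 − q`,
`q ∈ (0, 1)`), a Gaussian measurement model, a scale `M` with `t₁ < M < t₂`, and two events
`(μ₁, σ₁)`, `(μ₂, σ₂)` with `σ₁, σ₂ > 0`, such that the remeasurement probabilities satisfy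
`P_M^{(1)} < P_M^{(2)}` while the posterior truth probabilities satisfy
`Q_M^{(1)} > Q_M^{(2)}`, where `P_M^{(i)} = ∫_M^∞ Gauss(x, μ_i, σ_i) dx` and
`Q_M^{(i)} = (1 − q)·Gauss(μ_i, t₂, σ_i) / (q·Gauss(μ_i, t₁, σ_i) + (1 − q)·Gauss(μ_i, t₂, σ_i))`.
Hence an ordering of events by `P_M` does not determine the ordering by `Q_M`. -/
theorem exists_P_and_Q_orderings_differ :
    ∃ (t₁ t₂ q M μ₁ μ₂ σ₁ σ₂ : ℝ), t₁ < t₂ ∧ 0 < q ∧ q < 1 ∧ t₁ < M ∧ M < t₂ ∧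
      0 < σ₁ ∧ 0 < σ₂ ∧
      (∫ x in Set.Ioi M, gauss x μ₁ σ₁) < (∫ x in Set.Ioi M, gauss x μ₂ σ₂) ∧
      (1 - q) * gauss μ₁ t₂ σ₁ / (q * gauss μ₁ t₁ σ₁ + (1 - q) * gauss μ₁ t₂ σ₁)
        > (1 - q) * gauss μ₂ t₂ σ₂ / (q * gauss μ₂ t₁ σ₂ + (1 - q) * gauss μ₂ t₂ σ₂) := by
  refine ⟨0, 2, 1/2, 1, 2, 3, 1, 3/2, by norm_num, by norm_num, by norm_num, by norm_num,
    by norm_num, by norm_num, by norm_num, P_lt, ?_⟩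
  set s := Real.sqrt (2 * Real.pi) with hs_def
  have h2π : (0:ℝ) < 2 * Real.pi := by positivity
  have hs : 0 < s := Real.sqrt_pos.mpr h2π
  have hss : (Real.sqrt Real.pi)⁻¹ * (Real.sqrt 2)⁻¹ = s⁻¹ := by
    rw [hs_def, Real.sqrt_mul (by norm_num : (0:ℝ) ≤ 2), mul_inv]; ring
  have g1 : gauss 2 2 1 = (1/s) * Real.exp 0 := by unfold gauss; norm_num; exact hss
  have g2 : gauss 2 0 1 = (1/s) * Real.exp (-2) := by unfold gauss; norm_num; exact hss
  have g3 : gauss 3 2 (3/2) = (1/((3/2)*s)) * Real.exp (-(2/9)) := by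
    unfold gauss; norm_num; exact hss
  have g4 : gauss 3 0 (3/2) = (1/((3/2)*s)) * Real.exp (-2) := by
    unfold gauss; norm_num; exact hss
  have pA1 : 0 < gauss 2 2 1 := gauss_pos _ _ _ one_pos
  have pB1 : 0 < gauss 2 0 1 := gauss_pos _ _ _ one_pos
  have pA2 : 0 < gauss 3 2 (3/2) := gauss_pos _ _ _ (by norm_num)
  have pB2 : 0 < gauss 3 0 (3/2) := gauss_pos _ _ _ (by norm_num)
  have key : gauss 3 2 (3/2) * gauss 2 0 1 < gauss 2 2 1 * gauss 3 0 (3/2) := by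
    rw [g1, g2, g3, g4]
    have e1 : Real.exp (-(2/9)) < Real.exp 0 := Real.exp_lt_exp.mpr (by norm_num)
    have e2 : 0 < Real.exp (-2) := Real.exp_pos _
    have e3 : 0 < Real.exp 0 := Real.exp_pos _
    have hk : (0:ℝ) < 1/((3/2)*s) * (1/s) := by positivity
    nlinarith [mul_pos hk e2]
  rw [gt_iff_lt, div_lt_div_iff₀ (by nlinarith) (by nlinarith)]
  nlinarith [key, pA1, pA2, pB1, pB2]
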